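/- Let (w_n) be a sequence of real numbers with 0 < w_n < 1 for all n and liminf_{n→∞} n·w_n > 1/2, and use the identity ordering. Then Σ_N(0) = 0 for all N, and there exists θ₀ > 0 such that Σ_N(θ₀) → 0 as N → ∞. In particular, any pointwise limit function Σ(θ) = lim_{N→∞} Σ_N(θ) takes the same value 0 at θ = 0 and at θ = θ₀, hence is not injective. -/

import Mathlib

open Filter

/-- The lift `Φ_n(w; θ) = θ − (2/n)·arctan( Im(w e^{inθ}) / (1 + Re(w e^{inθ})) )`. -/
noncomputable def PhiLift (n : ℕ+) (w : ℂ) (θ : ℝ) : ℝ :=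
  θ - (2 / ((n : ℕ) : ℝ)) * Real.arctan
    ((w * Complex.exp ((((n : ℕ) : ℂ)) * (θ : ℂ) * Complex.I)).im /
      (1 + (w * Complex.exp ((((n : ℕ) : ℂ)) * (θ : ℂ) * Complex.I)).re))

/-- `Σ_0(θ) = θ` and `Σ_N = Φ_N(w_N;·) ∘ ⋯ ∘ Φ_1(w_1;·)` (identity ordering). -/
noncomputable def SigLiftId (w : ℕ+ → ℂ) : ℕ → ℝ → ℝ
  | 0 => fun θ => θ
  | N + 1 => fun θ => PhiLift ⟨N + 1, N.succ_pos⟩ (w ⟨N + 1, N.succ_pos⟩) (SigLiftId w N θ)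

set_option maxHeartbeats 1000000

lemma phiLift_eq (n : ℕ+) (v θ : ℝ) :
    PhiLift n ((v:ℝ):ℂ) θ = θ - (2 / ((n:ℕ):ℝ)) * Real.arctan
      (v * Real.sin (((n:ℕ):ℝ)*θ) / (1 + v * Real.cos (((n:ℕ):ℝ)*θ))) := by
  unfold PhiLift
  have h : (((n:ℕ):ℂ)) * (θ:ℂ) * Complex.I = (((((n:ℕ):ℝ)*θ : ℝ)):ℂ) * Complex.I := by
    push_cast; ring
  rw [h]
  simp only [Complex.mul_im, Complex.mul_re, Complex.exp_ofReal_mul_I_re,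
    Complex.exp_ofReal_mul_I_im, Complex.ofReal_re, Complex.ofReal_im]
  ring_nf

lemma arctan_pos' {x : ℝ} (hx : 0 < x) : 0 < Real.arctan x := by
  rw [← Real.arctan_zero]; exact Real.arctan_strictMono hx

lemma arctan_lower {x : ℝ} (hx : 0 ≤ x) : x * (1 - x^2/2) ≤ Real.arctan x := by
  have h1 : Real.sin (Real.arctan x) ≤ Real.arctan x :=
    Real.sin_le (by rw [← Real.arctan_zero]; exact Real.arctan_strictMono.monotone hx)
  rw [Real.sin_arctan] at h1
  have hs : Real.sqrt (1 + x^2) ≤ 1 + x^2/2 := by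
    rw [show (1:ℝ)+x^2/2 = Real.sqrt ((1+x^2/2)^2) from (Real.sqrt_sq (by positivity)).symm]
    exact Real.sqrt_le_sqrt (by nlinarith)
  have hs0 : 0 < Real.sqrt (1 + x^2) := Real.sqrt_pos.2 (by positivity)
  have h2 : x / (1 + x^2/2) ≤ x / Real.sqrt (1+x^2) :=
    div_le_div_of_nonneg_left hx hs0 hs
  have h3 : x * (1 - x^2/2) ≤ x / (1 + x^2/2) := by
    rw [le_div_iff₀ (by positivity)]
    nlinarith [mul_nonneg hx (sq_nonneg (x^2/2))]
  linarith

lemma posdec (ν w θ : ℝ) (hν : 1 ≤ ν) (hw0 : 0 < w) (hw1 : w < 1)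
    (hθ0 : 0 < θ) (hφ1 : ν*θ ≤ 1) :
    0 < θ - (2/ν) * Real.arctan (w * Real.sin (ν*θ) / (1 + w * Real.cos (ν*θ))) ∧
    θ - (2/ν) * Real.arctan (w * Real.sin (ν*θ) / (1 + w * Real.cos (ν*θ))) ≤ θ := by
  set φ := ν*θ with hφ
  have hν0 : 0 < ν := lt_of_lt_of_le one_pos hν
  have hφ0 : 0 < φ := mul_pos hν0 hθ0
  have hπ : (2:ℝ) < Real.pi := by nlinarith [Real.pi_gt_three]
  have hsin : 0 < Real.sin φ := Real.sin_pos_of_pos_of_lt_pi hφ0 (by linarith)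
  have hcos : 0 < Real.cos φ := Real.cos_pos_of_mem_Ioo ⟨by linarith, by linarith⟩
  have hden : 0 < 1 + w * Real.cos φ := by nlinarith
  have hx0 : 0 < w * Real.sin φ / (1 + w * Real.cos φ) := by positivity
  have hs2 : 0 < Real.sin (φ/2) := Real.sin_pos_of_pos_of_lt_pi (by linarith) (by linarith)
  have hc2 : 0 < Real.cos (φ/2) := Real.cos_pos_of_mem_Ioo ⟨by linarith, by linarith⟩
  have hsin2 : Real.sin φ = 2 * Real.sin (φ/2) * Real.cos (φ/2) := by
    have h := Real.sin_two_mul (φ/2)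
    rw [show 2*(φ/2) = φ by ring] at h
    exact h
  have hcos2 : Real.cos (φ/2)^2 = 1/2 + Real.cos φ/2 := by
    have h := Real.cos_sq (φ/2)
    rw [show 2*(φ/2) = φ by ring] at h
    exact h
  have htan : w * Real.sin φ / (1 + w * Real.cos φ) < Real.tan (φ/2) := by
    rw [Real.tan_eq_sin_div_cos, div_lt_div_iff₀ hden hc2]
    calc w * Real.sin φ * Real.cos (φ/2)
        = Real.sin (φ/2) * (w * (2 * Real.cos (φ/2)^2)) := by rw [hsin2]; ring
      _ = Real.sin (φ/2) * (w * (1 + Real.cos φ)) := by rw [hcos2]; ring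
      _ < Real.sin (φ/2) * (1 + w * Real.cos φ) := by
          apply mul_lt_mul_of_pos_left _ hs2; nlinarith
  have hA : Real.arctan (w * Real.sin φ / (1 + w * Real.cos φ)) < φ/2 := by
    calc Real.arctan (w * Real.sin φ / (1 + w * Real.cos φ))
        < Real.arctan (Real.tan (φ/2)) := Real.arctan_strictMono htan
      _ = φ/2 := Real.arctan_tan (by linarith) (by linarith)
  have hA0 : 0 < Real.arctan (w * Real.sin φ / (1 + w * Real.cos φ)) := arctan_pos' hx0
  constructor
  · have h1 : (2/ν) * Real.arctan (w * Real.sin φ / (1 + w * Real.cos φ)) < (2/ν) * (φ/2) :=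
      mul_lt_mul_of_pos_left hA (by positivity)
    have hφθ : (2/ν) * (φ/2) = θ := by field_simp [hφ]; ring
    linarith
  · nlinarith [mul_pos (div_pos two_pos hν0) hA0]

lemma keylem (b t ν w θ : ℝ) (hb : 1/2 < b) (hb1 : b ≤ 1) (ht0 : 0 < t) (ht1 : t ≤ 1)
    (htb : 3*b*t^2 ≤ 2*b-1) (hν2 : 2 ≤ ν*(2*b-1)) (hν1 : 1 ≤ ν)
    (hw0 : 0 < w) (hw1 : w < 1) (hbw : b ≤ ν*w)
    (hθ1 : t/(ν+1) < θ) (hθ2 : θ ≤ t/ν) :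
    θ - (2/ν) * Real.arctan (w * Real.sin (ν*θ) / (1 + w * Real.cos (ν*θ))) ≤ t/(ν+1) := by
  set φ := ν*θ with hφdef
  have hν0 : 0 < ν := lt_of_lt_of_le one_pos hν1
  have hθ0 : 0 < θ := lt_trans (by positivity) hθ1
  have hφ0 : 0 < φ := mul_pos hν0 hθ0
  have hφt : φ ≤ t := by
    have := mul_le_mul_of_nonneg_left hθ2 hν0.le
    rw [mul_div_cancel₀ t hν0.ne'] at this
    exact this
  have hφlb : ν*t/(ν+1) ≤ φ := by
    have := mul_le_mul_of_nonneg_left hθ1.le hν0.le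
    calc ν*t/(ν+1) = ν*(t/(ν+1)) := by ring
      _ ≤ ν*θ := this
  have hπ : (2:ℝ) < Real.pi := by nlinarith [Real.pi_gt_three]
  have hφ1 : φ ≤ 1 := le_trans hφt ht1
  have hsin : 0 < Real.sin φ := Real.sin_pos_of_pos_of_lt_pi hφ0 (by linarith)
  have hcos0 : 0 ≤ Real.cos φ := Real.cos_nonneg_of_mem_Icc ⟨by linarith, by linarith⟩
  have hcos1 : Real.cos φ ≤ 1 := Real.cos_le_one φ
  have hden : 0 < 1 + w * Real.cos φ := by nlinarith
  set x := w * Real.sin φ / (1 + w * Real.cos φ) with hxdef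
  have hx0 : 0 < x := by positivity
  have hsinφ_le : Real.sin φ ≤ φ := le_of_lt (Real.sin_lt hφ0)
  have hx_le : x ≤ t := by
    rw [hxdef]
    calc w * Real.sin φ / (1 + w * Real.cos φ) ≤ w * Real.sin φ / 1 := by
          apply div_le_div_of_nonneg_left (by positivity) one_pos (by nlinarith)
      _ = w * Real.sin φ := by ring
      _ ≤ t := by nlinarith
  have hsin_lb : φ * (1 - t^2/4) ≤ Real.sin φ := by
    have h := Real.sin_gt_sub_cube hφ0
    nlinarith [mul_nonneg (mul_nonneg hφ0.le (sub_nonneg.2 hφt)) (by positivity : (0:ℝ) ≤ t + φ)]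
  have hx_lb : b * Real.sin φ / (ν+1) ≤ x := by
    rw [hxdef, div_le_div_iff₀ (by positivity) hden]
    have e1 : b*(1+w) ≤ w*(ν+1) := by nlinarith [mul_le_mul_of_nonneg_right hb1 hw0.le]
    have e2 : 1 + w * Real.cos φ ≤ 1 + w := by nlinarith
    calc b * Real.sin φ * (1 + w * Real.cos φ)
        ≤ b * Real.sin φ * (1 + w) := by
          apply mul_le_mul_of_nonneg_left e2 (by positivity)
      _ = Real.sin φ * (b*(1+w)) := by ring
      _ ≤ Real.sin φ * (w*(ν+1)) := mul_le_mul_of_nonneg_left e1 hsin.le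
      _ = w * Real.sin φ * (ν+1) := by ring
  have ht2 : (0:ℝ) ≤ 1 - t^2/2 := by nlinarith
  have hA : t/(2*(ν+1)) ≤ Real.arctan x := by
    have h1 : x * (1 - x^2/2) ≤ Real.arctan x := arctan_lower hx0.le
    have h2 : x * (1 - t^2/2) ≤ x * (1 - x^2/2) := by
      nlinarith [mul_nonneg (mul_nonneg hx0.le (sub_nonneg.2 hx_le)) (by positivity : (0:ℝ) ≤ t + x)]
    have h3 : (b * Real.sin φ / (ν+1)) * (1 - t^2/2) ≤ x * (1 - t^2/2) :=
      mul_le_mul_of_nonneg_right hx_lb ht2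
    have h4 : t/(2*(ν+1)) ≤ (b * Real.sin φ / (ν+1)) * (1 - t^2/2) := by
      rw [div_le_iff₀ (by positivity : (0:ℝ) < 2*(ν+1))]
      have expand : b * Real.sin φ / (ν+1) * (1 - t^2/2) * (2*(ν+1)) =
          2*b*Real.sin φ*(1-t^2/2) := by field_simp
      rw [expand]
      have hs1 : ν*t/(ν+1)*(1-t^2/4) ≤ Real.sin φ := by nlinarith
      have hs2 : 2*b*(ν*t/(ν+1)*(1-t^2/4))*(1-t^2/2) ≤ 2*b*Real.sin φ*(1-t^2/2) := by
        have : (0:ℝ) ≤ 2*b*(1-t^2/2) := by nlinarith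
        nlinarith [mul_le_mul_of_nonneg_right hs1 this]
      refine le_trans ?_ hs2
      rw [← sub_nonneg]
      have key2 : 2*b*(ν*t/(ν+1)*(1-t^2/4))*(1-t^2/2) - t =
          (t/(ν+1)) * (2*b*ν*(1-t^2/4)*(1-t^2/2) - (ν+1)) := by field_simp
      rw [key2]
      apply mul_nonneg (by positivity)
      rw [sub_nonneg]
      have hh1 : ν*(3*b*t^2) ≤ ν*(2*b-1) := mul_le_mul_of_nonneg_left htb hν0.le
      have hh2 : (0:ℝ) ≤ b*ν*t^4 := by positivity
      nlinarith [hh1, hh2, hν2]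
    linarith
  have hstep : t/(ν*(ν+1)) ≤ (2/ν) * Real.arctan x := by
    calc t/(ν*(ν+1)) = (2/ν) * (t/(2*(ν+1))) := by field_simp
      _ ≤ (2/ν) * Real.arctan x := mul_le_mul_of_nonneg_left hA (by positivity)
  have hfin : t/ν - t/(ν*(ν+1)) = t/(ν+1) := by field_simp; ring
  linarith

/-- If `0 < w_n < 1` are real with `liminf n·w_n > 1/2` (identity ordering), then
`Σ_N(0) = 0` for all `N` and there is `θ₀ > 0` with `Σ_N(θ₀) → 0`; hence any pointwise
limit `Σ` of the `Σ_N` satisfies `Σ(θ₀) = Σ(0) = 0` and is not injective. -/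
theorem sigLift_not_injective_of_liminf_gt (w : ℕ+ → ℝ)
    (hw : ∀ n, 0 < w n ∧ w n < 1)
    (hliminf : 1 / 2 < Filter.liminf (fun n : ℕ+ => ((n : ℕ) : ℝ) * w n) atTop) :
    (∀ N : ℕ, SigLiftId (fun n => ((w n : ℝ) : ℂ)) N 0 = 0) ∧
    ∃ θ₀ : ℝ, 0 < θ₀ ∧
      Tendsto (fun N => SigLiftId (fun n => ((w n : ℝ) : ℂ)) N θ₀) atTop (nhds 0) ∧
      ∀ S : ℝ → ℝ,
        (∀ θ : ℝ, Tendsto (fun N => SigLiftId (fun n => ((w n : ℝ) : ℂ)) N θ) atTop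
          (nhds (S θ))) →
        S θ₀ = 0 ∧ S 0 = 0 ∧ ¬ Function.Injective S := by
  set W : ℕ+ → ℂ := fun n => ((w n : ℝ) : ℂ) with hWdef
  have h0 : ∀ N : ℕ, SigLiftId W N 0 = 0 := by
    intro N
    induction N with
    | zero => rfl
    | succ N ih =>
      show PhiLift (⟨N+1, N.succ_pos⟩ : ℕ+) (W ⟨N+1, N.succ_pos⟩) (SigLiftId W N 0) = 0
      rw [ih]
      rw [show W ⟨N+1, N.succ_pos⟩ = ((w ⟨N+1, N.succ_pos⟩ : ℝ) : ℂ) from rfl]; refine (phiLift_eq _ _ _).trans ?_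
      simp
  set L := Filter.liminf (fun n : ℕ+ => ((n : ℕ) : ℝ) * w n) atTop with hL
  set b : ℝ := min ((1/2 + L)/2) (3/4) with hbdef
  have hb : 1/2 < b := lt_min (by rw [hL] at hliminf ⊢; linarith) (by norm_num)
  have hb1 : b ≤ 1 := le_trans (min_le_right _ _) (by norm_num)
  have hbL : b < L := lt_of_le_of_lt (min_le_left _ _) (by linarith)
  have hbdd : IsBoundedUnder (· ≥ ·) atTop (fun n : ℕ+ => ((n : ℕ) : ℝ) * w n) :=
    isBoundedUnder_of ⟨0, fun n => by have := (hw n).1; positivity⟩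
  have hev : ∀ᶠ n : ℕ+ in atTop, b < ((n : ℕ) : ℝ) * w n :=
    Filter.eventually_lt_of_lt_liminf hbL hbdd
  obtain ⟨m, hm⟩ := eventually_atTop.1 hev
  have hb2 : 0 < 2*b - 1 := by linarith
  set t : ℝ := min 1 (Real.sqrt ((2*b-1)/(6*b))) with htdef
  have htq : (0:ℝ) < (2*b-1)/(6*b) := by positivity
  have ht0 : 0 < t := lt_min one_pos (Real.sqrt_pos.2 htq)
  have ht1 : t ≤ 1 := min_le_left _ _
  have htsq : t^2 ≤ (2*b-1)/(6*b) := by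
    have h1 : t ≤ Real.sqrt ((2*b-1)/(6*b)) := min_le_right _ _
    calc t^2 ≤ (Real.sqrt ((2*b-1)/(6*b)))^2 := by
          apply pow_le_pow_left₀ ht0.le h1
      _ = (2*b-1)/(6*b) := Real.sq_sqrt htq.le
  have htb : 3*b*t^2 ≤ 2*b-1 := by
    have h2 := mul_le_mul_of_nonneg_left htsq (by positivity : (0:ℝ) ≤ 3*b)
    have heq : 3*b*((2*b-1)/(6*b)) = (2*b-1)/2 := by field_simp; ring
    nlinarith
  set N₀ : ℕ := max (max (m:ℕ) 1) ⌈(2:ℝ)/(2*b-1)⌉₊ with hN₀def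
  have hN₀1 : 1 ≤ N₀ := le_trans (le_max_right _ _) (le_max_left _ _)
  have hN₀m : (m:ℕ) ≤ N₀ := le_trans (le_max_left _ _) (le_max_left _ _)
  have hN₀c : (2:ℝ)/(2*b-1) ≤ (N₀:ℝ) := by
    calc (2:ℝ)/(2*b-1) ≤ (⌈(2:ℝ)/(2*b-1)⌉₊:ℝ) := Nat.le_ceil _
      _ ≤ (N₀:ℝ) := by exact_mod_cast Nat.cast_le.2 (le_max_right _ _)
  have hN₀2 : (2:ℝ) ≤ (N₀:ℝ)*(2*b-1) := by
    rw [div_le_iff₀ hb2] at hN₀c; linarith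
  set θ₀ : ℝ := t/((N₀:ℝ)+1) with hθ₀def
  have hθ₀pos : 0 < θ₀ := by positivity
  have inv : ∀ N : ℕ, 0 < SigLiftId W N θ₀ ∧
      SigLiftId W N θ₀ ≤ t/(((max N N₀ : ℕ):ℝ)+1) := by
    intro N
    induction N with
    | zero =>
      refine ⟨hθ₀pos, ?_⟩
      show θ₀ ≤ t/(((max 0 N₀ : ℕ):ℝ)+1)
      rw [Nat.zero_max]
    | succ N ih =>
      obtain ⟨hpos, hle⟩ := ih
      set θ := SigLiftId W N θ₀ with hθdef
      set M : ℝ := ((max N N₀ : ℕ):ℝ) with hMdef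
      have hMN : (N:ℝ) ≤ M := by
        rw [hMdef]; exact_mod_cast Nat.cast_le.2 (le_max_left _ _)
      have hMpos : (0:ℝ) < M + 1 := by
        have : (0:ℝ) ≤ M := by rw [hMdef]; positivity
        linarith
      set ν : ℝ := (N:ℝ)+1 with hνdef
      have hν1 : 1 ≤ ν := by rw [hνdef]; have : (0:ℝ) ≤ (N:ℝ) := Nat.cast_nonneg N; linarith
      have hν0 : 0 < ν := lt_of_lt_of_le one_pos hν1
      have hwn0 := (hw ⟨N+1, N.succ_pos⟩).1
      have hwn1 := (hw ⟨N+1, N.succ_pos⟩).2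
      have heq : SigLiftId W (N+1) θ₀ = θ - (2/ν) * Real.arctan
          ((w ⟨N+1, N.succ_pos⟩) * Real.sin (ν*θ) /
            (1 + (w ⟨N+1, N.succ_pos⟩) * Real.cos (ν*θ))) := by
        show PhiLift (⟨N+1, N.succ_pos⟩ : ℕ+) (W ⟨N+1, N.succ_pos⟩) θ = _
        rw [show W ⟨N+1, N.succ_pos⟩ = ((w ⟨N+1, N.succ_pos⟩ : ℝ) : ℂ) from rfl]; refine (phiLift_eq _ _ _).trans ?_
        norm_num [hνdef]
      have hφ1 : ν*θ ≤ 1 := by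
        have hνM : ν ≤ M + 1 := by linarith
        have h1 : ν*θ ≤ ν*(t/(M+1)) := mul_le_mul_of_nonneg_left hle hν0.le
        have h2 : ν*(t/(M+1)) ≤ t := by
          calc ν*(t/(M+1)) = t * (ν/(M+1)) := by ring
            _ ≤ t * 1 := by
                apply mul_le_mul_of_nonneg_left _ ht0.le
                rw [div_le_one hMpos]; exact hνM
            _ = t := mul_one t
        exact le_trans h1 (le_trans h2 ht1)
      have hpd := posdec ν (w ⟨N+1, N.succ_pos⟩) θ hν1 hwn0 hwn1 hpos hφ1
      rw [← heq] at hpd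
      obtain ⟨hpos', hle'⟩ := hpd
      refine ⟨hpos', ?_⟩
      by_cases hc : N+1 ≤ N₀
      · have e1 : max (N+1) N₀ = N₀ := max_eq_right hc
        have e2 : max N N₀ = N₀ := max_eq_right (le_trans (Nat.le_succ N) hc)
        rw [e1]
        rw [hMdef, e2] at hle
        linarith
      · push_neg at hc
        have hN₀N : N₀ ≤ N := Nat.lt_succ_iff.mp hc
        have e1 : max (N+1) N₀ = N+1 := max_eq_left (le_trans hN₀N (Nat.le_succ N))
        have e2 : max N N₀ = N := max_eq_left hN₀N
        rw [e1]
        have hgoalcast : (((N+1 : ℕ)):ℝ) + 1 = ν + 1 := by rw [hνdef]; push_cast; ring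
        rw [hgoalcast]
        rw [hMdef, e2] at hle
        by_cases hc2 : θ ≤ t/(ν+1)
        · linarith
        · push_neg at hc2
          have hν2 : 2 ≤ ν*(2*b-1) := by
            have hνN₀ : (N₀:ℝ) ≤ ν := by
              rw [hνdef]
              have : (N₀:ℝ) ≤ (N:ℝ) := Nat.cast_le.2 hN₀N
              linarith
            nlinarith
          have hbw : b ≤ ν * (w ⟨N+1, N.succ_pos⟩) := by
            have hmle : m ≤ (⟨N+1, N.succ_pos⟩ : ℕ+) := by
              apply (PNat.coe_le_coe _ _).mp
              show (m:ℕ) ≤ N+1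
              omega
            have h4 : b < (((N+1 : ℕ)):ℝ) * w ⟨N+1, N.succ_pos⟩ := hm _ hmle
            push_cast at h4
            rw [hνdef]
            linarith
          have hθ2 : θ ≤ t/ν := by rw [hνdef]; exact hle
          rw [heq]
          exact keylem b t ν (w ⟨N+1, N.succ_pos⟩) θ hb hb1 ht0 ht1 htb hν2 hν1
            hwn0 hwn1 hbw hc2 hθ2
  have hub : ∀ᶠ N : ℕ in atTop, SigLiftId W N θ₀ ≤ t/((N:ℝ)+1) := by
    filter_upwards [eventually_ge_atTop N₀] with N hN
    have h := (inv N).2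
    rwa [max_eq_left hN] at h
  have hlb : ∀ᶠ N : ℕ in atTop, 0 ≤ SigLiftId W N θ₀ :=
    Eventually.of_forall fun N => (inv N).1.le
  have hg : Tendsto (fun N : ℕ => t/((N:ℝ)+1)) atTop (nhds 0) := by
    have h := tendsto_one_div_add_atTop_nhds_zero_nat.const_mul t
    simpa [mul_one_div, div_eq_mul_inv] using h
  have htend : Tendsto (fun N => SigLiftId W N θ₀) atTop (nhds 0) := squeeze_zero' hlb hub hg
  refine ⟨h0, θ₀, hθ₀pos, htend, ?_⟩
  intro S hS
  have h1 : S θ₀ = 0 := tendsto_nhds_unique (hS θ₀) htend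
  have h2 : S 0 = 0 := by
    have hc : Tendsto (fun N => SigLiftId W N 0) atTop (nhds 0) := by
      simp only [h0]; exact tendsto_const_nhds
    exact tendsto_nhds_unique (hS 0) hc
  exact ⟨h1, h2, fun hinj => absurd (hinj (by rw [h1, h2])) (ne_of_gt hθ₀pos)⟩
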